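/- For every integer n ≥ 1, the following identity holds in ℚ: binom(2n, n) = 2n · Σ_{k=1}^{n} (1/k) · Σ ∏_{j=1}^{k} catalan(i_j − 1), where the inner sum ranges over all compositions (i_1, …, i_k) of n into k positive parts (i_j ≥ 1, i_1 + ⋯ + i_k = n). (This identity expresses that the image under the morphism sending every word to 1 of the noncommutative power sum Φ_n, specialized at the Dyck code, equals the ghost component w_n(*2!/2!) = binom(2n,n)/2; catalan(i−1) counts the Dyck primes of semilength i.) -/

import Mathlib

open Finset PowerSeries

namespace CBAux



noncomputable def cbq (n : ℕ) : ℚ := (Nat.centralBinom n : ℚ)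
noncomputable def cq (n : ℕ) : ℚ := (catalan n : ℚ)

noncomputable def U : PowerSeries ℚ := PowerSeries.mk cbq
noncomputable def V : PowerSeries ℚ := PowerSeries.mk cq

lemma key (k : ℕ) : 2 * cbq k - cq k = cbq (k + 1) / 2 := by
  have h1 : ((k : ℚ) + 1) * cbq (k + 1) = 2 * (2 * k + 1) * cbq k := by
    have := Nat.succ_mul_centralBinom_succ k
    unfold cbq; exact_mod_cast this
  have h2 : ((k : ℚ) + 1) * cq k = cbq k := by
    have := succ_mul_catalan_eq_centralBinom k
    unfold cbq cq; exact_mod_cast this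
  have hk : (k : ℚ) + 1 ≠ 0 := by positivity
  rw [eq_div_iff (two_ne_zero)]
  apply mul_left_cancel₀ hk
  ring_nf
  ring_nf at h1 h2
  nlinarith [h1, h2]

lemma Vrec : V = 1 + X * (V * V) := by
  ext n
  cases n with
  | zero =>
    simp [V, cq, PowerSeries.coeff_zero_eq_constantCoeff, map_mul, map_add]
  | succ s =>
    rw [map_add, PowerSeries.coeff_succ_X_mul]
    have h1 : (PowerSeries.coeff (s + 1)) (1 : PowerSeries ℚ) = 0 := by
      simp [PowerSeries.coeff_one]
    rw [h1, zero_add, PowerSeries.coeff_mul]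
    simp only [V, PowerSeries.coeff_mk]
    have := catalan_succ' s
    have : (catalan (s + 1) : ℚ) = ∑ ij ∈ Finset.HasAntidiagonal.antidiagonal s, (catalan ij.1 : ℚ) * (catalan ij.2 : ℚ) := by
      rw [catalan_succ' s]; push_cast; rfl
    simpa [cq] using this

lemma hUV : ∀ r : ℕ, (PowerSeries.coeff r) (U * V) = cbq (r + 1) / 2 := by
  intro r
  induction r using Nat.strong_induction_on with
  | _ r ih =>
    match r with
    | 0 =>
      rw [PowerSeries.coeff_mul]
      have : Nat.centralBinom 1 = 2 := by decide
      simp [U, V, cbq, cq, this]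
    | Nat.succ s =>
      have e : U * V = U + X * (V * (U * V)) := by
        conv_lhs => rw [Vrec]
        ring
      have h1 : (PowerSeries.coeff (s + 1)) (U * V)
          = cbq (s + 1) + (PowerSeries.coeff s) (V * (U * V)) := by
        conv_lhs => rw [e]
        rw [map_add, PowerSeries.coeff_succ_X_mul]
        simp [U]
      have h2 : (PowerSeries.coeff s) (V * (U * V))
          = ∑ p ∈ Finset.HasAntidiagonal.antidiagonal s, cq p.1 * (cbq (p.2 + 1) / 2) := by
        rw [PowerSeries.coeff_mul]
        refine Finset.sum_congr rfl fun p hp => ?_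
        have hp2 : p.2 < s + 1 := by
          have := Finset.HasAntidiagonal.mem_antidiagonal.mp hp; omega
        rw [ih p.2 hp2]
        simp [V]
      have h3 : ∑ p ∈ Finset.HasAntidiagonal.antidiagonal (s + 1), cq p.1 * (cbq p.2 / 2)
          = cq (s + 1) * (cbq 0 / 2)
            + ∑ p ∈ Finset.HasAntidiagonal.antidiagonal s, cq p.1 * (cbq (p.2 + 1) / 2) := by
        rw [Finset.Nat.sum_antidiagonal_succ' (f := fun p => cq p.1 * (cbq p.2 / 2))]
      have h4 : ∑ p ∈ Finset.HasAntidiagonal.antidiagonal (s + 1), cq p.1 * (cbq p.2 / 2)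
          = (PowerSeries.coeff (s + 1)) (U * V) / 2 := by
        rw [show U * V = V * U by ring, PowerSeries.coeff_mul, Finset.sum_div]
        refine Finset.sum_congr rfl fun p hp => ?_
        simp [U, V, mul_div_assoc]
      have hb0 : cbq 0 = 1 := by simp [cbq, Nat.centralBinom_zero]
      have hkey := key (s + 1)
      have h5 : (PowerSeries.coeff s) (V * (U * V))
          = (PowerSeries.coeff (s + 1)) (U * V) / 2 - cq (s + 1) * (1 / 2) := by
        rw [h2]
        rw [h4, hb0] at h3
        linarith
      rw [h5] at h1
      linarith

lemma hsum_range (r : ℕ) :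
    ∑ j ∈ Finset.range (r + 1), cbq j * cq (r - j) = cbq (r + 1) / 2 := by
  rw [← hUV r, PowerSeries.coeff_mul,
    Finset.Nat.sum_antidiagonal_eq_sum_range_succ_mk]
  simp [U, V]




noncomputable def P {n : ℕ} (c : Composition n) : ℚ :=
  (c.blocks.map (fun i => (catalan (i - 1) : ℚ))).prod

lemma blocks_ne_nil {n : ℕ} (hn : 1 ≤ n) (c : Composition n) : c.blocks ≠ [] := by
  intro h
  have := c.blocks_sum
  rw [h] at this
  simp at this
  omega

lemma headI_mem {n : ℕ} (hn : 1 ≤ n) (c : Composition n) : c.blocks.headI ∈ c.blocks := by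
  obtain ⟨a, t, h⟩ := List.exists_cons_of_ne_nil (blocks_ne_nil hn c)
  rw [h]; simp

/-- forward map: prepend a block -/
def fwd {n : ℕ} (m : ℕ) (hm : m ∈ Finset.Icc 1 n) (c : Composition (n - m)) : Composition n := by
  refine ⟨m :: c.blocks, ?_, ?_⟩
  · intro i hi
    rcases List.mem_cons.mp hi with h | h
    · subst h; exact (Finset.mem_Icc.mp hm).1
    · exact c.blocks_pos h
  · rw [List.sum_cons, c.blocks_sum]
    have := (Finset.mem_Icc.mp hm).2
    omega

/-- backward map: remove the first block -/
def bwd {n : ℕ} (hn : 1 ≤ n) (c : Composition n) : Composition (n - c.blocks.headI) := by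
  refine ⟨c.blocks.tail, ?_, ?_⟩
  · intro i hi
    exact c.blocks_pos (List.mem_of_mem_tail hi)
  · obtain ⟨a, t, h⟩ := List.exists_cons_of_ne_nil (blocks_ne_nil hn c)
    have hs := c.blocks_sum
    rw [h] at hs ⊢
    simp only [List.headI_cons, List.tail_cons]
    rw [List.sum_cons] at hs
    omega

lemma comp_decomp (n : ℕ) (hn : 1 ≤ n) (F : List ℕ → ℚ) :
    ∑ c : Composition n, F c.blocks
      = ∑ m ∈ Finset.Icc 1 n, ∑ c : Composition (n - m), F (m :: c.blocks) := by
  rw [← Finset.sum_sigma (Finset.Icc 1 n) (fun m => (Finset.univ : Finset (Composition (n - m))))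
      (fun x => F (x.1 :: x.2.blocks))]
  symm
  refine Finset.sum_bij' (fun x hx => fwd x.1 (Finset.mem_sigma.mp hx).1 x.2)
    (fun c _ => ⟨c.blocks.headI, bwd hn c⟩) (fun _ _ => Finset.mem_univ _) ?_ ?_ ?_ ?_
  · intro c _
    rw [Finset.mem_sigma]
    refine ⟨?_, Finset.mem_univ _⟩
    rw [Finset.mem_Icc]
    constructor
    · exact c.blocks_pos (headI_mem hn c)
    · have : c.blocks.headI ≤ c.blocks.sum :=
        List.single_le_sum (fun x _ => Nat.zero_le x) _ (headI_mem hn c)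
      rw [c.blocks_sum] at this
      exact this
  · intro x hx
    refine Sigma.ext rfl (heq_of_eq ?_)
    apply Composition.ext
    simp [fwd, bwd]
  · intro c _
    apply Composition.ext
    obtain ⟨a, t, h⟩ := List.exists_cons_of_ne_nil (blocks_ne_nil hn c)
    simp [fwd, bwd, h]
  · intro x hx
    rfl


lemma icc_sum {M : Type*} [AddCommMonoid M] (n : ℕ) (f : ℕ → M) :
    ∑ m ∈ Finset.Icc 1 n, f m = ∑ j ∈ Finset.range n, f (j + 1) := by
  induction n with
  | zero => simp
  | succ k ih =>
    rw [Finset.sum_Icc_succ_top (Nat.one_le_iff_ne_zero.mpr (Nat.succ_ne_zero k)) f,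
      Finset.sum_range_succ, ih]

lemma comp_zero (c : Composition 0) : c.blocks = [] := by
  cases hb : c.blocks with
  | nil => rfl
  | cons a t =>
    exfalso
    have ha : 0 < a := c.blocks_pos (by rw [hb]; simp)
    have hs := c.blocks_sum
    rw [hb, List.sum_cons] at hs
    omega

lemma card_comp_zero : ∑ c : Composition 0, (1 : ℚ) = 1 := by
  haveI : Subsingleton (Composition 0) :=
    ⟨fun a b => Composition.ext (by rw [comp_zero a, comp_zero b])⟩
  haveI : Nonempty (Composition 0) := ⟨⟨[], by simp, by simp⟩⟩
  haveI : Unique (Composition 0) := ⟨⟨Classical.arbitrary _⟩, fun a => Subsingleton.elim a _⟩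
  rw [Finset.sum_const]
  simp [Fintype.card_unique]


lemma sum_P : ∀ r : ℕ, ∑ c : Composition r, P c = cq r := by
  intro r
  induction r using Nat.strong_induction_on with
  | _ r ih =>
    match r with
    | 0 =>
      have h : ∀ c : Composition 0, P c = 1 := by
        intro c; unfold P; rw [comp_zero c]; simp
      rw [Finset.sum_congr rfl (fun c _ => h c), card_comp_zero]
      simp [cq]
    | Nat.succ s =>
      unfold P
      rw [comp_decomp (s + 1) (Nat.succ_le_succ (Nat.zero_le s))
        (fun bl => (bl.map (fun i => (catalan (i - 1) : ℚ))).prod)]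
      have h1 : ∀ m ∈ Finset.Icc 1 (s + 1),
          (∑ c : Composition (s + 1 - m),
            (((m :: c.blocks).map (fun i => (catalan (i - 1) : ℚ))).prod))
          = cq (m - 1) * cq (s + 1 - m) := by
        intro m hm
        obtain ⟨hm1, hm2⟩ := Finset.mem_Icc.mp hm
        have : ∀ c : Composition (s + 1 - m),
            (((m :: c.blocks).map (fun i => (catalan (i - 1) : ℚ))).prod)
            = (catalan (m - 1) : ℚ) * P c := by
          intro c; simp [P]
        rw [Finset.sum_congr rfl (fun c _ => this c), ← Finset.mul_sum,
          ih (s + 1 - m) (by omega)]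
        simp [cq]
      rw [Finset.sum_congr rfl h1, icc_sum]
      have h2 : ∀ j ∈ Finset.range (s + 1),
          cq (j + 1 - 1) * cq (s + 1 - (j + 1)) = cq j * cq (s - j) := by
        intro j hj
        have : s + 1 - (j + 1) = s - j := by omega
        rw [this]
        rfl
      rw [Finset.sum_congr rfl h2]
      unfold cq
      rw [show ((catalan (s+1) : ℚ)) = ((∑ ij ∈ Finset.HasAntidiagonal.antidiagonal s, catalan ij.1 * catalan ij.2 : ℕ) : ℚ) by rw [← catalan_succ']]
      rw [Finset.Nat.sum_antidiagonal_eq_sum_range_succ_mk]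
      push_cast
      rfl

def rot {n : ℕ} (j : ℕ) (c : Composition n) : Composition n :=
  ⟨c.blocks.rotate j,
   fun hi => c.blocks_pos (List.mem_rotate.mp hi),
   ((c.blocks.rotate_perm j).sum_eq).trans c.blocks_sum⟩

lemma rot_length {n : ℕ} (j : ℕ) (c : Composition n) : (rot j c).length = c.length := by
  simp [rot, Composition.length]

lemma rot_P {n : ℕ} (j : ℕ) (c : Composition n) : P (rot j c) = P c := by
  unfold P rot
  simp only [List.map_rotate]
  exact ((c.blocks.map (fun i => (catalan (i - 1) : ℚ))).rotate_perm j).prod_eq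

lemma rot_sum (n k j : ℕ) (hk : 1 ≤ k) (g : Composition n → ℚ) :
    ∑ c ∈ Finset.univ.filter (fun c : Composition n => c.length = k), g (rot j c)
      = ∑ c ∈ Finset.univ.filter (fun c : Composition n => c.length = k), g c := by
  obtain ⟨k', rfl⟩ : ∃ k', k = k' + 1 := ⟨k - 1, by omega⟩
  have comp1 : ∀ c : Composition n, c.length = k' + 1 → rot j (rot (j * k') c) = c := by
    intro c hc
    apply Composition.ext
    show (c.blocks.rotate (j * k')).rotate j = c.blocks
    rw [List.rotate_rotate, show j * k' + j = c.blocks.length * j by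
      rw [show c.blocks.length = k' + 1 from hc]; ring, List.rotate_length_mul]
  have comp2 : ∀ c : Composition n, c.length = k' + 1 → rot (j * k') (rot j c) = c := by
    intro c hc
    apply Composition.ext
    show (c.blocks.rotate j).rotate (j * k') = c.blocks
    rw [List.rotate_rotate, show j + j * k' = c.blocks.length * j by
      rw [show c.blocks.length = k' + 1 from hc]; ring, List.rotate_length_mul]
  refine Finset.sum_bij' (fun c _ => rot j c) (fun c _ => rot (j * k') c) ?_ ?_ ?_ ?_ ?_
  · intro c hc
    rw [Finset.mem_filter] at hc ⊢
    exact ⟨Finset.mem_univ _, (rot_length j c).trans hc.2⟩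
  · intro c hc
    rw [Finset.mem_filter] at hc ⊢
    exact ⟨Finset.mem_univ _, (rot_length _ c).trans hc.2⟩
  · intro c hc
    exact comp2 c (Finset.mem_filter.mp hc).2
  · intro c hc
    exact comp1 c (Finset.mem_filter.mp hc).2
  · intro c hc
    rfl

lemma headI_rot {n : ℕ} (c : Composition n) (j : ℕ) (hj : j < c.length) :
    (rot j c).blocks.headI = c.blocks.getD j 0 := by
  have h1 : (rot j c).blocks = c.blocks.drop j ++ c.blocks.take j := by
    show c.blocks.rotate j = _
    exact List.rotate_eq_drop_append_take hj.le
  have h2 : c.blocks.drop j ≠ [] := by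
    intro h
    have := List.drop_eq_nil_iff.mp h
    have : j < c.blocks.length := hj
    omega
  obtain ⟨a, t, ht⟩ := List.exists_cons_of_ne_nil h2
  have hga : c.blocks.getD j 0 = a := by
    rw [List.getD_eq_getElem?_getD]
    have : c.blocks[j]? = (c.blocks.drop j).head? := List.head?_drop.symm
    rw [this, ht]
    rfl
  rw [h1, ht, hga]
  rfl

lemma sum_getD (l : List ℕ) : ∑ j ∈ Finset.range l.length, l.getD j 0 = l.sum := by
  induction l with
  | nil => simp
  | cons a t ih =>
    rw [List.length_cons, Finset.sum_range_succ']
    simp only [List.getD_cons_succ, List.getD_cons_zero, List.sum_cons]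
    omega

lemma head_sum (n k : ℕ) (hk : 1 ≤ k) :
    (k : ℚ) * ∑ c ∈ Finset.univ.filter (fun c : Composition n => c.length = k),
        (c.blocks.headI : ℚ) * P c
      = (n : ℚ) * ∑ c ∈ Finset.univ.filter (fun c : Composition n => c.length = k), P c := by
  have step : ∀ j < k,
      ∑ c ∈ Finset.univ.filter (fun c : Composition n => c.length = k),
        (c.blocks.headI : ℚ) * P c
      = ∑ c ∈ Finset.univ.filter (fun c : Composition n => c.length = k),
        (c.blocks.getD j 0 : ℚ) * P c := by
    intro j hj
    rw [← rot_sum n k j hk (fun c => (c.blocks.headI : ℚ) * P c)]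
    refine Finset.sum_congr rfl fun c hc => ?_
    have hc2 : c.length = k := (Finset.mem_filter.mp hc).2
    rw [headI_rot c j (by omega), rot_P]
  calc (k : ℚ) * ∑ c ∈ Finset.univ.filter (fun c : Composition n => c.length = k),
        (c.blocks.headI : ℚ) * P c
      = ∑ j ∈ Finset.range k, ∑ c ∈ Finset.univ.filter
          (fun c : Composition n => c.length = k), (c.blocks.headI : ℚ) * P c := by
        rw [Finset.sum_const, nsmul_eq_mul, Finset.card_range]
    _ = ∑ j ∈ Finset.range k, ∑ c ∈ Finset.univ.filter
          (fun c : Composition n => c.length = k), (c.blocks.getD j 0 : ℚ) * P c := by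
        refine Finset.sum_congr rfl fun j hj => step j (Finset.mem_range.mp hj)
    _ = ∑ c ∈ Finset.univ.filter (fun c : Composition n => c.length = k),
          (∑ j ∈ Finset.range k, (c.blocks.getD j 0 : ℚ)) * P c := by
        rw [Finset.sum_comm]
        refine Finset.sum_congr rfl fun c hc => ?_
        rw [Finset.sum_mul]
    _ = (n : ℚ) * ∑ c ∈ Finset.univ.filter (fun c : Composition n => c.length = k), P c := by
        rw [Finset.mul_sum]
        refine Finset.sum_congr rfl fun c hc => ?_
        have hc2 : c.length = k := (Finset.mem_filter.mp hc).2
        have : ∑ j ∈ Finset.range k, (c.blocks.getD j 0 : ℚ) = (n : ℚ) := by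
          rw [← Nat.cast_sum]
          rw [show k = c.blocks.length from hc2.symm]
          rw [sum_getD, c.blocks_sum]
        rw [this]

end CBAux


/-- The identity `binom(2n,n) = 2n · Σ_{k=1}^{n} (1/k) Σ_{i₁+⋯+i_k=n}
∏_j catalan(i_j − 1)`, where the inner sum is over compositions of `n` into `k`
positive parts: the image of the noncommutative power sum `Φ_n` of the Dyck
code under the morphism sending every word to `1` is the ghost component
`binom(2n,n)/2`. -/
theorem central_binom_eq_sum_over_compositions_of_catalan (n : ℕ) (hn : 1 ≤ n) :
    (Nat.choose (2 * n) n : ℚ) =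
      2 * n * ∑ k ∈ Finset.Icc 1 n, (1 / (k : ℚ)) *
        ∑ c ∈ Finset.univ.filter (fun c : Composition n => c.length = k),
          (c.blocks.map (fun i => (catalan (i - 1) : ℚ))).prod := by
  have hn0 : (n : ℚ) ≠ 0 := Nat.cast_ne_zero.mpr (by omega)
  have key1 : ∀ k ∈ Finset.Icc 1 n,
      (1 / (k : ℚ)) * ∑ c ∈ Finset.univ.filter (fun c : Composition n => c.length = k),
          (c.blocks.map (fun i => (catalan (i - 1) : ℚ))).prod
      = (1 / (n : ℚ)) * ∑ c ∈ Finset.univ.filter (fun c : Composition n => c.length = k),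
          (c.blocks.headI : ℚ) * CBAux.P c := by
    intro k hk
    obtain ⟨hk1, _⟩ := Finset.mem_Icc.mp hk
    have hk0 : (k : ℚ) ≠ 0 := Nat.cast_ne_zero.mpr (by omega)
    have h := CBAux.head_sum n k hk1
    have hPeq : ∑ c ∈ Finset.univ.filter (fun c : Composition n => c.length = k),
        (c.blocks.map (fun i => (catalan (i - 1) : ℚ))).prod
        = ∑ c ∈ Finset.univ.filter (fun c : Composition n => c.length = k), CBAux.P c := rfl
    rw [hPeq]
    field_simp
    linarith [h]
  rw [Finset.sum_congr rfl key1, ← Finset.mul_sum]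
  have key2 : ∑ k ∈ Finset.Icc 1 n,
      ∑ c ∈ Finset.univ.filter (fun c : Composition n => c.length = k),
        (c.blocks.headI : ℚ) * CBAux.P c
      = ∑ c : Composition n, (c.blocks.headI : ℚ) * CBAux.P c := by
    exact Finset.sum_fiberwise_of_maps_to
      (fun c _ => Finset.mem_Icc.mpr ⟨c.length_pos_of_pos (by omega), c.length_le⟩) _
  rw [key2]
  have key3 : ∑ c : Composition n, (c.blocks.headI : ℚ) * CBAux.P c = CBAux.cbq n / 2 := by
    have hdec := CBAux.comp_decomp n hn
      (fun bl => (bl.headI : ℚ) * ((bl.map fun i => (catalan (i - 1) : ℚ)).prod))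
    calc ∑ c : Composition n, (c.blocks.headI : ℚ) * CBAux.P c
        = ∑ m ∈ Finset.Icc 1 n, ∑ c : Composition (n - m),
            ((m :: c.blocks).headI : ℚ)
              * (((m :: c.blocks).map fun i => (catalan (i - 1) : ℚ)).prod) := hdec
      _ = ∑ m ∈ Finset.Icc 1 n, (m : ℚ) * ((catalan (m - 1) : ℚ) * CBAux.cq (n - m)) := by
          refine Finset.sum_congr rfl fun m hm => ?_
          have hc : ∀ c : Composition (n - m),
              ((m :: c.blocks).headI : ℚ)
                * (((m :: c.blocks).map fun i => (catalan (i - 1) : ℚ)).prod)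
              = (m : ℚ) * ((catalan (m - 1) : ℚ) * CBAux.P c) := by
            intro c
            simp only [CBAux.P, List.headI_cons, List.map_cons, List.prod_cons]
          rw [Finset.sum_congr rfl (fun c _ => hc c), ← Finset.mul_sum, ← Finset.mul_sum,
            CBAux.sum_P]
      _ = ∑ j ∈ Finset.range n, CBAux.cbq j * CBAux.cq (n - 1 - j) := by
          rw [CBAux.icc_sum]
          refine Finset.sum_congr rfl fun j hj => ?_
          have hj' : j < n := Finset.mem_range.mp hj
          have e1 : j + 1 - 1 = j := by omega
          have e2 : n - (j + 1) = n - 1 - j := by omega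
          rw [e1, e2]
          have : ((j : ℚ) + 1) * (catalan j : ℚ) = CBAux.cbq j := by
            unfold CBAux.cbq
            exact_mod_cast succ_mul_catalan_eq_centralBinom j
          push_cast
          rw [← this]
          ring
      _ = CBAux.cbq n / 2 := by
          have h := CBAux.hsum_range (n - 1)
          rw [show n - 1 + 1 = n by omega] at h
          exact h
  rw [key3]
  have hcb : (Nat.choose (2 * n) n : ℚ) = CBAux.cbq n := rfl
  rw [hcb]
  field_simp
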